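/- Let T be a rooted tree with root r, and let V^s be a finite set of nodes of T. Sort the nodes of V^s as v_{i_1}, ..., v_{i_m} according to DFS traversal order (increasing entry time). Let V^lca = {LCA(u,v) : u, v ∈ V^s} and V^olca = {LCA(v_{i_j}, v_{i_{j+1}}) : 1 ≤ j ≤ m-1}. Then V^lca = V^s ∪ V^olca. -/

import Mathlib

variable {V : Type} [Fintype V] [DecidableEq V]

/-- `u` is an ancestor of `v` in the tree `G` rooted at `root`:
`u` lies on the unique path from `root` to `v`. -/
def isAncestor (G : SimpleGraph V) (root u v : V) : Prop :=
  G.dist root u + G.dist u v = G.dist root v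

/-- `w` is the lowest common ancestor of `u` and `v`: a common ancestor such that
every common ancestor of `u` and `v` is an ancestor of `w`. -/
def isLCA (G : SimpleGraph V) (root u v w : V) : Prop :=
  isAncestor G root w u ∧ isAncestor G root w v ∧
    ∀ x, isAncestor G root x u → isAncestor G root x v → isAncestor G root x w

/-- `tin` is a DFS entry-time ordering of the tree `G` rooted at `root`:
distinct nodes get distinct times, ancestors are entered no later than their
descendants, and each subtree occupies a contiguous interval of entry times. -/
structure IsDFSOrder (G : SimpleGraph V) (root : V) (tin : V → ℕ) : Prop where
  inj : Function.Injective tin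
  anc_le : ∀ u v, isAncestor G root u v → tin u ≤ tin v
  interval : ∀ w x y z, isAncestor G root w x → isAncestor G root w z →
    tin x ≤ tin y → tin y ≤ tin z → isAncestor G root w y

namespace StmtAux

open SimpleGraph

lemma anc_refl (G : SimpleGraph V) (root v : V) : isAncestor G root v v := by
  simp [isAncestor, SimpleGraph.dist_self]

lemma anc_antisymm {G : SimpleGraph V} (hG : G.IsTree) {root x y : V}
    (h1 : isAncestor G root x y) (h2 : isAncestor G root y x) : x = y := by
  unfold isAncestor at h1 h2
  have hxy : G.dist x y = 0 := by omega
  exact (hG.isConnected.dist_eq_zero_iff).mp hxy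

lemma anc_trans {G : SimpleGraph V} (hG : G.IsTree) {root x y z : V}
    (h1 : isAncestor G root x y) (h2 : isAncestor G root y z) :
    isAncestor G root x z := by
  unfold isAncestor at *
  have t1 : G.dist root z ≤ G.dist root x + G.dist x z :=
    hG.isConnected.dist_triangle
  have t2 : G.dist x z ≤ G.dist x y + G.dist y z :=
    hG.isConnected.dist_triangle
  omega

/-- Two ancestors of the same vertex are comparable. -/
lemma anc_total {G : SimpleGraph V} (hG : G.IsTree) {root x y b : V}
    (hx : isAncestor G root x b) (hy : isAncestor G root y b)
    (hxy : G.dist root x ≤ G.dist root y) : isAncestor G root x y := by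
  have hc := hG.isConnected
  obtain ⟨p, hplen⟩ := hc.exists_walk_length_eq_dist root x
  obtain ⟨q, hqlen⟩ := hc.exists_walk_length_eq_dist x b
  obtain ⟨p', hplen'⟩ := hc.exists_walk_length_eq_dist root y
  obtain ⟨q', hqlen'⟩ := hc.exists_walk_length_eq_dist y b
  have hW : (p.append q).length = G.dist root b := by
    rw [Walk.length_append, hplen, hqlen]; exact hx
  have hW' : (p'.append q').length = G.dist root b := by
    rw [Walk.length_append, hplen', hqlen']; exact hy
  have hPW : (p.append q).IsPath := Walk.isPath_of_length_eq_dist _ hW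
  have hPW' : (p'.append q').IsPath := Walk.isPath_of_length_eq_dist _ hW'
  have heq : p.append q = p'.append q' :=
    ((hG.existsUnique_path root b).unique hPW hPW')
  have hy' : y ∈ (p.append q).support := by
    rw [heq, Walk.mem_support_append_iff]
    exact Or.inl p'.end_mem_support
  rw [Walk.mem_support_append_iff] at hy'
  unfold isAncestor
  rcases hy' with hyp | hyq
  · -- y on the root→x part
    have hsplit := congrArg Walk.length (p.take_spec hyp)
    rw [Walk.length_append] at hsplit
    have h1 : G.dist root y ≤ (p.takeUntil y hyp).length := dist_le _
    have h2 : G.dist y x ≤ (p.dropUntil y hyp).length := dist_le _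
    have h3 : G.dist x y = G.dist y x := dist_comm
    omega
  · -- y on the x→b part
    have hsplit := congrArg Walk.length (q.take_spec hyq)
    rw [Walk.length_append] at hsplit
    have h1 : G.dist x y ≤ (q.takeUntil y hyq).length := dist_le _
    have h2 : G.dist y b ≤ (q.dropUntil y hyq).length := dist_le _
    have t1 : G.dist root y ≤ G.dist root x + G.dist x y := hc.dist_triangle
    unfold isAncestor at hx hy
    omega

lemma lca_unique {G : SimpleGraph V} (hG : G.IsTree) {root u v w w' : V}
    (h : isLCA G root u v w) (h' : isLCA G root u v w') : w = w' :=
  anc_antisymm hG (h'.2.2 w h.1 h.2.1) (h.2.2 w' h'.1 h'.2.1)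

lemma lca_self {G : SimpleGraph V} (hG : G.IsTree) {root : V}
    {lca : V → V → V} (hlca : ∀ u v, isLCA G root u v (lca u v)) (v : V) :
    lca v v = v :=
  lca_unique hG (hlca v v)
    ⟨anc_refl G root v, anc_refl G root v, fun _ hx _ => hx⟩

lemma lca_comm {G : SimpleGraph V} (hG : G.IsTree) {root : V}
    {lca : V → V → V} (hlca : ∀ u v, isLCA G root u v (lca u v)) (u v : V) :
    lca u v = lca v u := by
  obtain ⟨h1, h2, h3⟩ := hlca v u
  exact lca_unique hG (hlca u v) ⟨h2, h1, fun x hx hy => h3 x hy hx⟩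

/-- Key step: for `tin a ≤ tin b ≤ tin c`, the LCA of `a` and `c` equals
the LCA of `a,b` or of `b,c`. -/
lemma lca_middle {G : SimpleGraph V} (hG : G.IsTree) {root : V} {tin : V → ℕ}
    (hdfs : IsDFSOrder G root tin)
    {lca : V → V → V} (hlca : ∀ u v, isLCA G root u v (lca u v))
    {a b c : V} (hab : tin a ≤ tin b) (hbc : tin b ≤ tin c) :
    lca a c = lca a b ∨ lca a c = lca b c := by
  obtain ⟨hza, hzc, hzmax⟩ := hlca a c
  have hzb : isAncestor G root (lca a c) b :=
    hdfs.interval _ a b c hza hzc hab hbc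
  have hzx : isAncestor G root (lca a c) (lca a b) :=
    (hlca a b).2.2 _ hza hzb
  have hzy : isAncestor G root (lca a c) (lca b c) :=
    (hlca b c).2.2 _ hzb hzc
  have hxb : isAncestor G root (lca a b) b := (hlca a b).2.1
  have hyb : isAncestor G root (lca b c) b := (hlca b c).1
  rcases le_total (G.dist root (lca a b)) (G.dist root (lca b c)) with hle | hle
  · left
    have hxy : isAncestor G root (lca a b) (lca b c) := anc_total hG hxb hyb hle
    have hxc : isAncestor G root (lca a b) c :=
      anc_trans hG hxy (hlca b c).2.1
    exact (anc_antisymm hG (hzmax _ (hlca a b).1 hxc) hzx).symm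
  · right
    have hyx : isAncestor G root (lca b c) (lca a b) := anc_total hG hyb hxb hle
    have hya : isAncestor G root (lca b c) a :=
      anc_trans hG hyx (hlca a b).1
    exact (anc_antisymm hG (hzmax _ hya (hlca b c).2.1) hzy).symm

end StmtAux

open StmtAux in
/-- for a set of nodes sorted in DFS order, the set of all pairwise
LCAs equals the union of the set itself with the LCAs of DFS-consecutive pairs. -/
theorem stmt0 (G : SimpleGraph V) (hG : G.IsTree) (root : V) (tin : V → ℕ)
    (hdfs : IsDFSOrder G root tin)
    (lca : V → V → V) (hlca : ∀ u v, isLCA G root u v (lca u v))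
    (Vs : Finset V) (l : List V) (hl : l.toFinset = Vs) (hnd : l.Nodup)
    (hsort : l.Pairwise fun a b => tin a < tin b) :
    (Vs ×ˢ Vs).image (fun p => lca p.1 p.2) =
      Vs ∪ ((l.zip l.tail).map fun p => lca p.1 p.2).toFinset := by
  -- helper: consecutive pairs are in the zip list
  have hconsec : ∀ k (hk : k + 1 < l.length),
      lca l[k] l[k+1] ∈ Vs ∪ ((l.zip l.tail).map fun p => lca p.1 p.2).toFinset := by
    intro k hk
    apply Finset.mem_union_right
    rw [List.mem_toFinset, List.mem_map]
    refine ⟨(l[k], l[k+1]), ?_, rfl⟩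
    have hk' : k < (l.zip l.tail).length := by
      rw [List.length_zip, List.length_tail]; omega
    have : (l.zip l.tail)[k] = (l[k], l.tail[k]'(by rw [List.length_tail]; omega)) :=
      List.getElem_zip ..
    rw [List.getElem_tail] at this
    rw [← this]
    exact List.getElem_mem hk'
  have hmono : ∀ i j (hi : i < l.length) (hj : j < l.length), i ≤ j →
      tin l[i] ≤ tin l[j] := by
    intro i j hi hj hij
    rcases Nat.lt_or_ge i j with h | h
    · exact le_of_lt (List.Pairwise.rel_get_of_lt hsort (by simpa using h))
    · have : i = j := by omega
      subst this; rfl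
  -- main induction
  have main : ∀ d i j (hi : i < l.length) (hj : j < l.length), j = i + d →
      lca l[i] l[j] ∈ Vs ∪ ((l.zip l.tail).map fun p => lca p.1 p.2).toFinset := by
    intro d
    induction d with
    | zero =>
      intro i j hi hj hij
      subst hij
      rw [lca_self hG hlca]
      exact Finset.mem_union_left _ (by rw [← hl, List.mem_toFinset]; exact List.getElem_mem hi)
    | succ d ih =>
      intro i j hi hj hij
      have hjd : i + d < l.length := by omega
      have hab : tin l[i] ≤ tin l[i+d] := hmono i (i+d) hi hjd (by omega)
      have hbc : tin l[i+d] ≤ tin l[j] := hmono (i+d) j hjd hj (by omega)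
      rcases lca_middle hG hdfs hlca hab hbc with h | h
      · rw [h]; exact ih i (i+d) hi hjd rfl
      · subst hij
        rw [h]
        exact hconsec (i+d) (by omega)
  ext w
  simp only [Finset.mem_image, Finset.mem_product, Prod.exists]
  constructor
  · rintro ⟨u, v, ⟨hu, hv⟩, rfl⟩
    rw [← hl, List.mem_toFinset] at hu hv
    obtain ⟨i, hi, rfl⟩ := List.getElem_of_mem hu
    obtain ⟨j, hj, rfl⟩ := List.getElem_of_mem hv
    rcases le_total i j with hij | hij
    · exact main (j - i) i j hi hj (by omega)
    · rw [lca_comm hG hlca]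
      exact main (i - j) j i hj hi (by omega)
  · intro hw
    rcases Finset.mem_union.mp hw with hw | hw
    · exact ⟨w, w, ⟨hw, hw⟩, lca_self hG hlca w⟩
    · rw [List.mem_toFinset, List.mem_map] at hw
      obtain ⟨⟨a, b⟩, hab, rfl⟩ := hw
      obtain ⟨ha, hb⟩ := List.of_mem_zip hab
      have hb' : b ∈ l := List.tail_subset l hb
      exact ⟨a, b, ⟨by rw [← hl, List.mem_toFinset]; exact ha,
        by rw [← hl, List.mem_toFinset]; exact hb'⟩, rfl⟩
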